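/- Let X be a Polish space without isolated points and f a transitive homeomorphism of X. Then the set M = {(x, y) ∈ X² : both forward and backward orbits of x and of y are dense in X, and O(x) ∩ O(y) = ∅} is comeagre in X². -/

import Mathlib

/-- The two-sided orbit `O(x) = {f^k(x) : k ∈ ℤ}`. -/
def orbitZ {X : Type*} (F : Equiv.Perm X) (x : X) : Set X := {y | ∃ k : ℤ, (F ^ k) x = y}

/-- Forward orbit `{f^k(x) : k ≥ 0}`. -/
def fwdOrbit {X : Type*} (F : Equiv.Perm X) (x : X) : Set X :=
  {y | ∃ k : ℕ, (F ^ (k : ℤ)) x = y}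

/-- Backward orbit `{f^{-k}(x) : k ≥ 1}`. -/
def bwdOrbit {X : Type*} (F : Equiv.Perm X) (x : X) : Set X :=
  {y | ∃ k : ℕ, 1 ≤ k ∧ (F ^ (-(k : ℤ))) x = y}

namespace Stmt13Aux

open Set Filter TopologicalSpace

variable {X : Type*} [TopologicalSpace X]

lemma zpow_comp (F : Equiv.Perm X) (a b : ℤ) (x : X) :
    (F ^ a) ((F ^ b) x) = (F ^ (a + b)) x := by
  rw [← Equiv.Perm.mul_apply, ← zpow_add]

lemma cont_zpow (f : X ≃ₜ X) (k : ℤ) : Continuous ⇑(f.toEquiv ^ k) := by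
  induction k using Int.induction_on with
  | zero => simpa using continuous_id
  | succ n ih =>
      have h : ⇑(f.toEquiv ^ ((n : ℤ) + 1)) = ⇑(f.toEquiv ^ (n : ℤ)) ∘ ⇑f := by
        funext x; rw [zpow_add_one]; rfl
      rw [h]; exact ih.comp f.continuous
  | pred n ih =>
      have h : ⇑(f.toEquiv ^ (-(n : ℤ) - 1)) = ⇑(f.toEquiv ^ (-(n : ℤ))) ∘ ⇑f.symm := by
        funext x; rw [zpow_sub_one]; rfl
      rw [h]; exact ih.comp f.symm.continuous

/-- Every point of a nonempty open set can be doubled (no isolated points). -/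
def TwoPt (X : Type*) [TopologicalSpace X] : Prop :=
  ∀ (U : Set X) (x : X), IsOpen U → x ∈ U → ∃ y ∈ U, y ≠ x

/-- Two-sided topological transitivity. -/
def ZTT (f : X ≃ₜ X) : Prop :=
  ∀ U V : Set X, IsOpen U → U.Nonempty → IsOpen V → V.Nonempty →
    ∃ k : ℤ, ∃ x ∈ U, (f.toEquiv ^ k) x ∈ V

variable [T2Space X] (f : X ≃ₜ X)

lemma rec1 (hZ : ZTT f) (hT : TwoPt X) {U : Set X} (hU : IsOpen U) (hUne : U.Nonempty) :
    ∃ k : ℤ, 1 ≤ k ∧ ∃ x ∈ U, (f.toEquiv ^ k) x ∈ U := by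
  obtain ⟨x, hx⟩ := hUne
  obtain ⟨y, hyU, hyx⟩ := hT U x hU hx
  obtain ⟨u, v, hu, hv, hyu, hxv, huv⟩ := t2_separation hyx
  obtain ⟨k, z, ⟨hzu, hzU⟩, hzk⟩ :=
    hZ (u ∩ U) (v ∩ U) (hu.inter hU) ⟨y, hyu, hyU⟩ (hv.inter hU) ⟨x, hxv, hx⟩
  have hk0 : k ≠ 0 := by
    rintro rfl
    simp only [zpow_zero, Equiv.Perm.coe_one, id_eq] at hzk
    exact (Set.disjoint_left.1 huv hzu) hzk.1
  rcases lt_or_gt_of_ne hk0 with hk | hk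
  · refine ⟨-k, by omega, (f.toEquiv ^ k) z, hzk.2, ?_⟩
    rw [zpow_comp, neg_add_cancel]
    simpa using hzU
  · exact ⟨k, by omega, z, hzU, hzk.2⟩

lemma recN (hZ : ZTT f) (hT : TwoPt X) {U : Set X} (hU : IsOpen U) (hUne : U.Nonempty)
    (N : ℤ) : ∃ k : ℤ, N ≤ k ∧ ∃ x ∈ U, (f.toEquiv ^ k) x ∈ U := by
  have key : ∀ m : ℕ, ∃ k : ℤ, (m : ℤ) ≤ k ∧ ∃ x ∈ U, (f.toEquiv ^ k) x ∈ U := by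
    intro m
    induction m with
    | zero =>
        obtain ⟨k, hk, h⟩ := rec1 f hZ hT hU hUne
        exact ⟨k, by omega, h⟩
    | succ n ih =>
        obtain ⟨k₀, hk₀, x₀, hx₀, hx₀'⟩ := ih
        have hWo : IsOpen (U ∩ (⇑(f.toEquiv ^ k₀)) ⁻¹' U) :=
          hU.inter (hU.preimage (cont_zpow f k₀))
        obtain ⟨k₁, hk₁, w, hw, hw'⟩ := rec1 f hZ hT hWo ⟨x₀, hx₀, hx₀'⟩
        refine ⟨k₀ + k₁, by omega, w, hw.1, ?_⟩
        have h2 := hw'.2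
        rwa [Set.mem_preimage, zpow_comp] at h2
  obtain ⟨k, hk, h⟩ := key N.toNat
  exact ⟨k, le_trans (Int.self_le_toNat N) hk, h⟩

lemma ntt (hZ : ZTT f) (hT : TwoPt X) {U V : Set X} (hU : IsOpen U) (hUne : U.Nonempty)
    (hV : IsOpen V) (hVne : V.Nonempty) :
    ∃ n : ℤ, 0 ≤ n ∧ ∃ x ∈ U, (f.toEquiv ^ n) x ∈ V := by
  obtain ⟨k, x, hxU, hxV⟩ := hZ U V hU hUne hV hVne
  rcases le_or_gt 0 k with h | h
  · exact ⟨k, h, x, hxU, hxV⟩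
  · have hWo : IsOpen (V ∩ (⇑(f.toEquiv ^ (-k))) ⁻¹' U) :=
      hV.inter (hU.preimage (cont_zpow f (-k)))
    have hWne : (V ∩ (⇑(f.toEquiv ^ (-k))) ⁻¹' U).Nonempty := by
      refine ⟨(f.toEquiv ^ k) x, hxV, ?_⟩
      rw [Set.mem_preimage, zpow_comp, neg_add_cancel]
      simpa using hxU
    obtain ⟨k₁, hk₁, w, hw, hw'⟩ := recN f hZ hT hWo hWne (-k)
    refine ⟨k₁ + k, by omega, (f.toEquiv ^ (-k)) w, hw.2, ?_⟩
    rw [zpow_comp]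
    have : k₁ + k + -k = k₁ := by omega
    rw [this]
    exact hw'.1

lemma ntt1 (hZ : ZTT f) (hT : TwoPt X) {U V : Set X} (hU : IsOpen U) (hUne : U.Nonempty)
    (hV : IsOpen V) (hVne : V.Nonempty) :
    ∃ n : ℤ, 1 ≤ n ∧ ∃ x ∈ U, (f.toEquiv ^ n) x ∈ V := by
  obtain ⟨n, hn, x, hxU, hxV⟩ := ntt f hZ hT hU hUne hV hVne
  rcases (by omega : 1 ≤ n ∨ n = 0) with h | rfl
  · exact ⟨n, h, x, hxU, hxV⟩
  · have hxV' : x ∈ V := by simpa using hxV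
    obtain ⟨k, hk, w, hw, hw'⟩ := rec1 f hZ hT (hU.inter hV) ⟨x, hxU, hxV'⟩
    exact ⟨k, hk, w, hw.1, hw'.2⟩

lemma residual_preimage_fst {Y : Type*} [TopologicalSpace Y] {s : Set X}
    (hs : s ∈ residual X) : (Prod.fst ⁻¹' s : Set (X × Y)) ∈ residual (X × Y) := by
  obtain ⟨S, hSo, hSd, hSc, hsub⟩ := mem_residual_iff.1 hs
  refine mem_residual_iff.2 ⟨(fun t => Prod.fst ⁻¹' t) '' S, ?_, ?_, hSc.image _, ?_⟩
  · rintro _ ⟨t, ht, rfl⟩; exact (hSo t ht).preimage continuous_fst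
  · rintro _ ⟨t, ht, rfl⟩
    show Dense (Prod.fst ⁻¹' t)
    rw [← Set.prod_univ]
    exact (hSd t ht).prod dense_univ
  · rw [Set.sInter_image]
    intro q hq
    exact hsub fun t ht => by
      simpa using Set.mem_iInter₂.1 hq t ht
  done

lemma residual_preimage_snd {Y : Type*} [TopologicalSpace Y] {s : Set Y}
    (hs : s ∈ residual Y) : (Prod.snd ⁻¹' s : Set (X × Y)) ∈ residual (X × Y) := by
  obtain ⟨S, hSo, hSd, hSc, hsub⟩ := mem_residual_iff.1 hs
  refine mem_residual_iff.2 ⟨(fun t => Prod.snd ⁻¹' t) '' S, ?_, ?_, hSc.image _, ?_⟩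
  · rintro _ ⟨t, ht, rfl⟩; exact (hSo t ht).preimage continuous_snd
  · rintro _ ⟨t, ht, rfl⟩
    show Dense (Prod.snd ⁻¹' t)
    rw [← Set.univ_prod]
    exact dense_univ.prod (hSd t ht)
  · rw [Set.sInter_image]
    intro q hq
    exact hsub fun t ht => by
      simpa using Set.mem_iInter₂.1 hq t ht

end Stmt13Aux

open Stmt13Aux Set Filter TopologicalSpace in
/-- In a Polish space without isolated points with a transitive homeomorphism `f`,
the set of pairs `(x,y)` such that both the forward and backward orbits of `x` and
of `y` are dense and `O(x) ∩ O(y) = ∅` is comeagre in `X²`. -/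
theorem stmt13 {X : Type*} [TopologicalSpace X] [PolishSpace X]
    (f : X ≃ₜ X)
    (hno : ∀ p : X, (nhdsWithin p {p}ᶜ).NeBot)
    (htrans : ∃ p : X, Dense (orbitZ f.toEquiv p)) :
    {q : X × X |
      Dense (fwdOrbit f.toEquiv q.1) ∧ Dense (bwdOrbit f.toEquiv q.1) ∧
      Dense (fwdOrbit f.toEquiv q.2) ∧ Dense (bwdOrbit f.toEquiv q.2) ∧
      orbitZ f.toEquiv q.1 ∩ orbitZ f.toEquiv q.2 = ∅} ∈ residual (X × X) := by
  classical
  set F := f.toEquiv with hF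
  -- no isolated points, two points in each nonempty open set
  have hT : TwoPt X := by
    intro U x hU hx
    have h1 : U ∩ {x}ᶜ ∈ nhdsWithin x {x}ᶜ :=
      inter_mem (mem_nhdsWithin_of_mem_nhds (hU.mem_nhds hx)) self_mem_nhdsWithin
    obtain ⟨y, hyU, hyx⟩ := (hno x).nonempty_of_mem h1
    exact ⟨y, hyU, hyx⟩
  -- two-sided transitivity
  obtain ⟨p, hp⟩ := htrans
  have hZ : ZTT f := by
    intro U V hU hUne hV hVne
    obtain ⟨xu, hxuo, hxuU⟩ := hp.exists_mem_open hU hUne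
    obtain ⟨xv, hxvo, hxvV⟩ := hp.exists_mem_open hV hVne
    obtain ⟨a, ha⟩ := hxuo
    obtain ⟨b, hb⟩ := hxvo
    refine ⟨b - a, xu, hxuU, ?_⟩
    rw [← ha, zpow_comp, sub_add_cancel, hb]
    exact hxvV
  -- the "hitting" open sets
  set A : Set X → Set X := fun U => ⋃ n : ℕ, (⇑(F ^ (n : ℤ))) ⁻¹' U with hA
  set Bw : Set X → Set X := fun U => ⋃ n : ℕ, ⋃ _ : 1 ≤ n, (⇑(F ^ (-(n : ℤ)))) ⁻¹' U with hBw
  obtain ⟨𝔅, h𝔅c, h𝔅ne, h𝔅b⟩ := exists_countable_basis X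
  have hIres : (⋂ U ∈ 𝔅, (A U ∩ Bw U)) ∈ residual X := by
    refine (countable_bInter_mem h𝔅c).2 fun U hU => ?_
    have hUo : IsOpen U := h𝔅b.isOpen hU
    have hUne : U.Nonempty := by
      rcases Set.eq_empty_or_nonempty U with rfl | h
      · exact absurd hU h𝔅ne
      · exact h
    refine inter_mem ?_ ?_
    · refine residual_of_dense_open (isOpen_iUnion fun n => hUo.preimage (cont_zpow f _)) ?_
      rw [dense_iff_inter_open]
      intro V hV hVne
      obtain ⟨n, hn, x, hxV, hxU⟩ := ntt f hZ hT hV hVne hUo hUne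
      refine ⟨x, hxV, Set.mem_iUnion.2 ⟨n.toNat, ?_⟩⟩
      rw [Set.mem_preimage, Int.toNat_of_nonneg hn]
      exact hxU
    · refine residual_of_dense_open
        (isOpen_iUnion fun n => isOpen_iUnion fun _ => hUo.preimage (cont_zpow f _)) ?_
      rw [dense_iff_inter_open]
      intro V hV hVne
      obtain ⟨n, hn, x, hxU, hxV⟩ := ntt1 f hZ hT hUo hUne hV hVne
      refine ⟨(F ^ n) x, hxV, Set.mem_iUnion.2 ⟨n.toNat, Set.mem_iUnion.2
        ⟨by omega, ?_⟩⟩⟩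
      rw [Set.mem_preimage, zpow_comp]
      have : -(n.toNat : ℤ) + n = 0 := by omega
      rw [this]
      simpa using hxU
  -- membership in the intersection gives dense forward and backward orbits
  have hxI : ∀ x ∈ ⋂ U ∈ 𝔅, (A U ∩ Bw U),
      Dense (fwdOrbit F x) ∧ Dense (bwdOrbit F x) := by
    intro x hx
    rw [Set.mem_iInter₂] at hx
    constructor
    · rw [h𝔅b.dense_iff]
      intro o ho hone
      obtain ⟨n, hn⟩ := Set.mem_iUnion.1 (hx o ho).1
      exact ⟨(F ^ (n : ℤ)) x, hn, ⟨n, rfl⟩⟩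
    · rw [h𝔅b.dense_iff]
      intro o ho hone
      obtain ⟨n, hn'⟩ := Set.mem_iUnion.1 (hx o ho).2
      obtain ⟨hn1, hn⟩ := Set.mem_iUnion.1 hn'
      exact ⟨(F ^ (-(n : ℤ))) x, hn, ⟨n, hn1, rfl⟩⟩
  -- the graphs of the iterates are closed and nowhere dense
  have hgraph : ∀ k : ℤ, ({q : X × X | (F ^ k) q.1 = q.2})ᶜ ∈ residual (X × X) := by
    intro k
    have hcl : IsClosed {q : X × X | (F ^ k) q.1 = q.2} :=
      isClosed_eq ((cont_zpow f k).comp continuous_fst) continuous_snd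
    refine residual_of_dense_open hcl.isOpen_compl ?_
    rw [← interior_eq_empty_iff_dense_compl]
    by_contra h
    obtain ⟨q, hq⟩ := Set.nonempty_iff_ne_empty.2 h
    obtain ⟨u, v, hu, hv, hq1, hq2, huv⟩ :=
      isOpen_prod_iff.1 isOpen_interior q.1 q.2 hq
    obtain ⟨y, hyv, hyq⟩ := hT v q.2 hv hq2
    have h1 : (q.1, y) ∈ {q : X × X | (F ^ k) q.1 = q.2} :=
      interior_subset (huv (Set.mk_mem_prod hq1 hyv))
    have h2 : q ∈ {q : X × X | (F ^ k) q.1 = q.2} := interior_subset hq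
    simp only [Set.mem_setOf_eq] at h1 h2
    exact hyq (h1.symm.trans h2)
  have hG : (⋂ k : ℤ, ({q : X × X | (F ^ k) q.1 = q.2})ᶜ) ∈ residual (X × X) :=
    countable_iInter_mem.2 hgraph
  -- assemble
  refine mem_of_superset
    (inter_mem (inter_mem (residual_preimage_fst hIres) (residual_preimage_snd hIres)) hG) ?_
  rintro ⟨x, y⟩ ⟨⟨hx, hy⟩, hg⟩
  obtain ⟨hx1, hx2⟩ := hxI x hx
  obtain ⟨hy1, hy2⟩ := hxI y hy
  refine ⟨hx1, hx2, hy1, hy2, ?_⟩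
  rw [Set.eq_empty_iff_forall_notMem]
  rintro z ⟨⟨a, ha⟩, ⟨b, hb⟩⟩
  have : (F ^ (-b + a)) x = y := by
    rw [← zpow_comp, ha, ← hb, zpow_comp, neg_add_cancel]
    simp
  exact (Set.mem_iInter.1 hg (-b + a)) this
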